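/- Let n ≥ 1 be an integer. Then for every integer k ≥ 0 and every real x, the polynomials η_k^{(n)} admit the explicit expansion η_k^{(n)}(x) = Σ_{j=0}^{k} (−1)^j·( x^j / j! )·ρ_{k-j}(x), where ρ_m(x) = [nx]_m / ( m!·(n)_m ), [t]_m = t(t-1)⋯(t-m+1) is the falling factorial and (n)_m = n(n+1)⋯(n+m-1) is the rising factorial. -/

import Mathlib

open Filter Topology Finset

/-- Baskakov basis functions `v_{k,n}(x) = C(n+k-1, k) x^k (1+x)^{-(n+k)}`. -/
noncomputable def baskakovBasis (n k : ℕ) (x : ℝ) : ℝ :=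
  (Nat.choose (n + k - 1) k : ℝ) * x ^ k / (1 + x) ^ (n + k)

/-- Baskakov operator `(V_n f)(x) = Σ_{k≥0} f(k/n) v_{k,n}(x)`. -/
noncomputable def baskakov (n : ℕ) (f : ℝ → ℝ) (x : ℝ) : ℝ :=
  ∑' k : ℕ, f ((k : ℝ) / n) * baskakovBasis n k x

/-- Polynomials θ_r^{(n)}: θ_0 = 1, θ_1 = 0 and
`n (r+1) θ_{r+1} = X (θ_r' + θ_{r-1})` for r ≥ 1, with X = x(1+x). -/
noncomputable def theta (n : ℕ) : ℕ → ℝ → ℝ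
  | 0 => fun _ => 1
  | 1 => fun _ => 0
  | r + 2 => fun x =>
      x * (1 + x) * (deriv (theta n (r + 1)) x + theta n r x) / (n * (r + 2))

/-- Polynomials η_r^{(n)}: η_0 = 1, η_1 = 0 and
`(n+r)(r+1) η_{r+1} = -r(1+2x) η_r - X η_{r-1}` for r ≥ 1, with X = x(1+x). -/
noncomputable def eta (n : ℕ) : ℕ → ℝ → ℝ
  | 0 => fun _ => 1
  | 1 => fun _ => 0
  | r + 2 => fun x =>
      (-((r + 1 : ℝ) * (1 + 2 * x) * eta n (r + 1) x) - x * (1 + x) * eta n r x) /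
        (((n : ℝ) + (r + 1)) * (r + 2))

/-- Rising factorial `(n)_r = n (n+1) ⋯ (n+r-1)`. -/
def risingFactorial (n r : ℕ) : ℕ := ∏ i ∈ Finset.range r, (n + i)

namespace EtaAux

noncomputable def uu (x : ℝ) (j : ℕ) : ℝ := (-1 : ℝ) ^ j * x ^ j / (Nat.factorial j : ℝ)

noncomputable def bb (n : ℕ) (x : ℝ) (m : ℕ) : ℝ :=
  (∏ i ∈ Finset.range m, ((n : ℝ) * x - i)) /
    ((Nat.factorial m : ℝ) * (risingFactorial n m : ℝ))

noncomputable def SS (n : ℕ) (x : ℝ) (k : ℕ) : ℝ :=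
  ∑ j ∈ Finset.range (k + 1), uu x j * bb n x (k - j)

lemma rf_pos {n : ℕ} (hn : 1 ≤ n) (m : ℕ) : 0 < risingFactorial n m := by
  unfold risingFactorial
  exact Finset.prod_pos fun i _ => by omega

lemma hu (x : ℝ) (j : ℕ) : x * uu x j = -((j : ℝ) + 1) * uu x (j + 1) := by
  unfold uu
  have h : (Nat.factorial j : ℝ) ≠ 0 := Nat.cast_ne_zero.2 (Nat.factorial_ne_zero j)
  have h2 : ((j : ℝ) + 1) ≠ 0 := by positivity
  rw [Nat.factorial_succ]
  push_cast
  field_simp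
  ring

lemma hb {n : ℕ} (hn : 1 ≤ n) (x : ℝ) (m : ℕ) :
    ((m : ℝ) + 1) * ((n : ℝ) + m) * bb n x (m + 1) = ((n : ℝ) * x - m) * bb n x m := by
  unfold bb
  have h1 : (Nat.factorial m : ℝ) ≠ 0 := Nat.cast_ne_zero.2 (Nat.factorial_ne_zero m)
  have h2 : (risingFactorial n m : ℝ) ≠ 0 :=
    ne_of_gt (by exact_mod_cast rf_pos hn m)
  have hn0 : (0 : ℝ) < n := by exact_mod_cast hn
  have h3 : (n : ℝ) + m ≠ 0 := by positivity
  have h4 : ((m : ℝ) + 1) ≠ 0 := by positivity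
  have h5 : risingFactorial n (m + 1) = risingFactorial n m * (n + m) :=
    Finset.prod_range_succ _ _
  rw [Finset.prod_range_succ, h5, Nat.factorial_succ]
  push_cast
  field_simp

lemma phi {n : ℕ} (hn : 1 ≤ n) (x : ℝ) (j m : ℕ) :
    ((m : ℝ) + 1) * ((n : ℝ) + m) * (uu x j * bb n x (m + 1))
      + (n : ℝ) * ((j : ℝ) + 1) * (uu x (j + 1) * bb n x m)
      + (m : ℝ) * (uu x j * bb n x m) = 0 := by
  linear_combination uu x j * hb hn x m + (n : ℝ) * bb n x m * hu x j

lemma shift (m : ℕ) (F : ℕ → ℝ) (hF0 : F 0 = 0) :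
    ∑ j ∈ Finset.range (m + 1), F j = ∑ j ∈ Finset.range m, F (j + 1) := by
  rw [Finset.sum_range_succ' F m, hF0, add_zero]

lemma key {n : ℕ} (hn : 1 ≤ n) (x : ℝ) (r : ℕ) :
    ((n : ℝ) + ((r : ℝ) + 1)) * ((r : ℝ) + 2) * SS n x (r + 2)
      + ((r : ℝ) + 1) * (1 + 2 * x) * SS n x (r + 1)
      + x * (1 + x) * SS n x r = 0 := by
  have e2 : SS n x (r + 2) = ∑ j ∈ Finset.range (r + 2 + 1), uu x j * bb n x (r + 2 - j) := rfl
  have e1 : SS n x (r + 1) = ∑ j ∈ Finset.range (r + 1 + 1), uu x j * bb n x (r + 1 - j) := rfl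
  have e0 : SS n x r = ∑ j ∈ Finset.range (r + 1), uu x j * bb n x (r - j) := rfl
  -- x * S_{r+1} as a sum on the (r+2)-diagonal
  have h3 : x * SS n x (r + 1)
      = ∑ j ∈ Finset.range (r + 2 + 1), (-(j : ℝ)) * (uu x j * bb n x (r + 2 - j)) := by
    rw [e1, Finset.mul_sum,
      shift (r + 2) (fun j => (-(j : ℝ)) * (uu x j * bb n x (r + 2 - j))) (by simp)]
    refine Finset.sum_congr rfl fun j hj => ?_
    have h1 : r + 2 - (j + 1) = r + 1 - j := by omega
    simp only [h1]
    push_cast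
    linear_combination bb n x (r + 1 - j) * hu x j
  -- x * S_r as a sum on the (r+1)-diagonal
  have h4 : x * SS n x r
      = ∑ j ∈ Finset.range (r + 1 + 1), (-(j : ℝ)) * (uu x j * bb n x (r + 1 - j)) := by
    rw [e0, Finset.mul_sum,
      shift (r + 1) (fun j => (-(j : ℝ)) * (uu x j * bb n x (r + 1 - j))) (by simp)]
    refine Finset.sum_congr rfl fun j hj => ?_
    have h1 : r + 1 - (j + 1) = r - j := by omega
    simp only [h1]
    push_cast
    linear_combination bb n x (r - j) * hu x j
  -- x * (x * S_r) on the (r+2)-diagonal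
  have h5 : x * (∑ j ∈ Finset.range (r + 1 + 1), (-(j : ℝ)) * (uu x j * bb n x (r + 1 - j)))
      = ∑ j ∈ Finset.range (r + 2 + 1),
          ((j : ℝ) * ((j : ℝ) - 1)) * (uu x j * bb n x (r + 2 - j)) := by
    rw [Finset.mul_sum,
      shift (r + 2) (fun j => ((j : ℝ) * ((j : ℝ) - 1)) * (uu x j * bb n x (r + 2 - j)))
        (by simp)]
    refine Finset.sum_congr rfl fun j hj => ?_
    have h1 : r + 2 - (j + 1) = r + 1 - j := by omega
    simp only [h1]
    push_cast
    linear_combination (-(j : ℝ)) * bb n x (r + 1 - j) * hu x j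
  -- reindex of the middle Phi term
  have h7 : ∑ j ∈ Finset.range (r + 1 + 1),
        (n : ℝ) * ((j : ℝ) + 1) * (uu x (j + 1) * bb n x (r + 1 - j))
      = ∑ j ∈ Finset.range (r + 2 + 1), (n : ℝ) * (j : ℝ) * (uu x j * bb n x (r + 2 - j)) := by
    rw [shift (r + 2) (fun j => (n : ℝ) * (j : ℝ) * (uu x j * bb n x (r + 2 - j))) (by simp)]
    refine Finset.sum_congr rfl fun j hj => ?_
    have h1 : r + 2 - (j + 1) = r + 1 - j := by omega
    simp only [h1]
    push_cast
    ring
  -- drop the vanishing top term of the first Phi component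
  have h8 : ∑ j ∈ Finset.range (r + 2 + 1),
        ((((r : ℝ) + 2) - (j : ℝ)) * (((n : ℝ) + (r : ℝ) + 1) - (j : ℝ)))
          * (uu x j * bb n x (r + 2 - j))
      = ∑ j ∈ Finset.range (r + 1 + 1),
        ((((r : ℝ) + 2) - (j : ℝ)) * (((n : ℝ) + (r : ℝ) + 1) - (j : ℝ)))
          * (uu x j * bb n x (r + 2 - j)) := by
    rw [Finset.sum_range_succ]
    have hz : ((((r : ℝ) + 2) - ((r + 2 : ℕ) : ℝ)) * (((n : ℝ) + (r : ℝ) + 1) - ((r + 2 : ℕ) : ℝ)))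
        * (uu x (r + 2) * bb n x (r + 2 - (r + 2))) = 0 := by
      push_cast
      ring
    rw [hz, add_zero]
  -- the sum of the termwise-vanishing Phi's
  have h6 : ∑ j ∈ Finset.range (r + 1 + 1),
        (((((r : ℝ) + 2) - (j : ℝ)) * (((n : ℝ) + (r : ℝ) + 1) - (j : ℝ)))
            * (uu x j * bb n x (r + 2 - j))
          + (n : ℝ) * ((j : ℝ) + 1) * (uu x (j + 1) * bb n x (r + 1 - j))
          + (((r : ℝ) + 1) - (j : ℝ)) * (uu x j * bb n x (r + 1 - j))) = 0 := by
    refine Finset.sum_eq_zero fun j hj => ?_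
    have hj' : j < r + 2 := Finset.mem_range.1 hj
    have hm1 : r + 1 - j + 1 = r + 2 - j := by omega
    have hc : ((r + 1 - j : ℕ) : ℝ) = (r : ℝ) + 1 - (j : ℝ) := by
      rw [Nat.cast_sub (by omega)]
      push_cast
      ring
    have hphi := phi hn x j (r + 1 - j)
    rw [hm1, hc] at hphi
    linear_combination hphi
  -- regroup the (r+2)-diagonal sums
  have hFsum : ((n : ℝ) + ((r : ℝ) + 1)) * ((r : ℝ) + 2)
        * (∑ j ∈ Finset.range (r + 2 + 1), uu x j * bb n x (r + 2 - j))
      + 2 * ((r : ℝ) + 1)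
        * (∑ j ∈ Finset.range (r + 2 + 1), (-(j : ℝ)) * (uu x j * bb n x (r + 2 - j)))
      + (∑ j ∈ Finset.range (r + 2 + 1),
          ((j : ℝ) * ((j : ℝ) - 1)) * (uu x j * bb n x (r + 2 - j)))
      = ∑ j ∈ Finset.range (r + 2 + 1),
          (((((r : ℝ) + 2) - (j : ℝ)) * (((n : ℝ) + (r : ℝ) + 1) - (j : ℝ)))
              * (uu x j * bb n x (r + 2 - j))
            + (n : ℝ) * (j : ℝ) * (uu x j * bb n x (r + 2 - j))) := by
    rw [Finset.mul_sum, Finset.mul_sum, ← Finset.sum_add_distrib, ← Finset.sum_add_distrib]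
    exact Finset.sum_congr rfl fun j hj => by ring
  -- regroup the (r+1)-diagonal sums
  have hGsum : ((r : ℝ) + 1)
        * (∑ j ∈ Finset.range (r + 1 + 1), uu x j * bb n x (r + 1 - j))
      + (∑ j ∈ Finset.range (r + 1 + 1), (-(j : ℝ)) * (uu x j * bb n x (r + 1 - j)))
      = ∑ j ∈ Finset.range (r + 1 + 1),
          (((r : ℝ) + 1) - (j : ℝ)) * (uu x j * bb n x (r + 1 - j)) := by
    rw [Finset.mul_sum, ← Finset.sum_add_distrib]
    exact Finset.sum_congr rfl fun j hj => by ring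
  -- split the combined (r+2)-diagonal sum
  have hsplit2 : ∑ j ∈ Finset.range (r + 2 + 1),
        (((((r : ℝ) + 2) - (j : ℝ)) * (((n : ℝ) + (r : ℝ) + 1) - (j : ℝ)))
            * (uu x j * bb n x (r + 2 - j))
          + (n : ℝ) * (j : ℝ) * (uu x j * bb n x (r + 2 - j)))
      = (∑ j ∈ Finset.range (r + 2 + 1),
          ((((r : ℝ) + 2) - (j : ℝ)) * (((n : ℝ) + (r : ℝ) + 1) - (j : ℝ)))
            * (uu x j * bb n x (r + 2 - j)))
        + (∑ j ∈ Finset.range (r + 2 + 1),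
            (n : ℝ) * (j : ℝ) * (uu x j * bb n x (r + 2 - j))) :=
    Finset.sum_add_distrib
  -- split the Phi sum
  have hsplit : ∑ j ∈ Finset.range (r + 1 + 1),
        (((((r : ℝ) + 2) - (j : ℝ)) * (((n : ℝ) + (r : ℝ) + 1) - (j : ℝ)))
            * (uu x j * bb n x (r + 2 - j))
          + (n : ℝ) * ((j : ℝ) + 1) * (uu x (j + 1) * bb n x (r + 1 - j))
          + (((r : ℝ) + 1) - (j : ℝ)) * (uu x j * bb n x (r + 1 - j)))
      = (∑ j ∈ Finset.range (r + 1 + 1),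
          ((((r : ℝ) + 2) - (j : ℝ)) * (((n : ℝ) + (r : ℝ) + 1) - (j : ℝ)))
            * (uu x j * bb n x (r + 2 - j)))
        + (∑ j ∈ Finset.range (r + 1 + 1),
            (n : ℝ) * ((j : ℝ) + 1) * (uu x (j + 1) * bb n x (r + 1 - j)))
        + (∑ j ∈ Finset.range (r + 1 + 1),
            (((r : ℝ) + 1) - (j : ℝ)) * (uu x j * bb n x (r + 1 - j))) := by
    rw [Finset.sum_add_distrib, Finset.sum_add_distrib]
  linear_combination ((n : ℝ) + ((r : ℝ) + 1)) * ((r : ℝ) + 2) * e2 + ((r : ℝ) + 1) * e1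
    + 2 * ((r : ℝ) + 1) * h3 + h4 + x * h4 + h5 + hFsum + hGsum + hsplit2 + h8 - h7
    - hsplit + h6

end EtaAux

/-- explicit expansion `η_k^{(n)}(x) = Σ_{j=0}^k (-1)^j (x^j/j!) ρ_{k-j}(x)`
with `ρ_m(x) = [nx]_m / (m! (n)_m)`. -/
theorem eta_explicit_expansion (n : ℕ) (hn : 1 ≤ n) (k : ℕ) (x : ℝ) :
    eta n k x
      = ∑ j ∈ Finset.range (k + 1),
          (-1 : ℝ) ^ j * x ^ j / (Nat.factorial j : ℝ) *
            ((∏ i ∈ Finset.range (k - j), ((n : ℝ) * x - i)) /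
              ((Nat.factorial (k - j) : ℝ) * (risingFactorial n (k - j) : ℝ))) := by
  have hn0 : (0 : ℝ) < n := by exact_mod_cast hn
  have main : ∀ m, eta n m x = EtaAux.SS n x m ∧ eta n (m + 1) x = EtaAux.SS n x (m + 1) := by
    intro m
    induction m with
    | zero =>
      constructor
      · show (1 : ℝ) = EtaAux.SS n x 0
        simp [EtaAux.SS, EtaAux.uu, EtaAux.bb, risingFactorial]
      · show (0 : ℝ) = EtaAux.SS n x 1
        simp only [EtaAux.SS, EtaAux.uu, EtaAux.bb, risingFactorial, Finset.sum_range_succ,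
          Finset.sum_range_zero, Finset.prod_range_succ, Finset.prod_range_zero]
        norm_num [Nat.factorial]
        field_simp
        ring
    | succ r ih =>
      refine ⟨ih.2, ?_⟩
      have h0 := ih.1
      have h1 := ih.2
      show eta n (r + 2) x = EtaAux.SS n x (r + 2)
      have hD : (((n : ℝ) + ((r : ℝ) + 1)) * ((r : ℝ) + 2)) ≠ 0 := by positivity
      simp only [eta]
      rw [h0, h1, div_eq_iff hD]
      linear_combination (-1 : ℝ) * EtaAux.key hn x r
  exact (main k).1
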